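/- For every finite simple graph G with at least one vertex, sdim(G + K_1) > sdim G, where G + K_1 is the graph obtained from G by adding one new vertex adjacent to every vertex of G. -/

import Mathlib

/-- A unit-distance embedding of a simple graph `G` in `ℝⁿ`: an injective map sending
adjacent vertices to points at distance 1, such that no other vertex lies on the
closed segment between the endpoints of an edge. -/
def IsUDEmbedding {V : Type*} (G : SimpleGraph V) {n : ℕ}
    (f : V → EuclideanSpace ℝ (Fin n)) : Prop :=
  Function.Injective f ∧
  (∀ ⦃u v⦄, G.Adj u v → dist (f u) (f v) = 1) ∧
  (∀ ⦃u v⦄, G.Adj u v → ∀ w, w ≠ u → w ≠ v → f w ∉ segment ℝ (f u) (f v))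

/-- `G` has a unit-distance embedding in `ℝⁿ`. -/
def HasUDEmbedding {V : Type*} (G : SimpleGraph V) (n : ℕ) : Prop :=
  ∃ f : V → EuclideanSpace ℝ (Fin n), IsUDEmbedding G f

/-- `G` has a unit-distance embedding in `ℝⁿ` whose image lies on a sphere of radius `r`. -/
def HasSphericalEmbeddingRadius {V : Type*} (G : SimpleGraph V) (n : ℕ) (r : ℝ) : Prop :=
  ∃ f : V → EuclideanSpace ℝ (Fin n), IsUDEmbedding G f ∧
    ∃ c : EuclideanSpace ℝ (Fin n), ∀ v, dist (f v) c = r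

/-- `G` has a unit-distance embedding in `ℝⁿ` whose image lies on a sphere
of radius `0 < r < 1`. -/
def HasSphericalEmbedding {V : Type*} (G : SimpleGraph V) (n : ℕ) : Prop :=
  ∃ r : ℝ, 0 < r ∧ r < 1 ∧ HasSphericalEmbeddingRadius G n r

/-- The dimension of a graph: the least `n` such that `G` has a unit-distance
embedding in `ℝⁿ`. -/
noncomputable def graphDim {V : Type*} (G : SimpleGraph V) : ℕ :=
  sInf {n | HasUDEmbedding G n}

/-- The spherical dimension of a graph: the least `n` such that `G` has a unit-distance
embedding in `ℝⁿ` on a sphere of radius strictly between 0 and 1.  By convention the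
spherical dimension of a graph with at most one vertex is `0`. -/
noncomputable def sphericalDim {V : Type*} [Fintype V] (G : SimpleGraph V) : ℕ :=
  if Fintype.card V ≤ 1 then 0 else sInf {n | HasSphericalEmbedding G n}

/-- The join `G + H` of two graphs: disjoint union together with all edges between them. -/
def graphJoin {V W : Type*} (G : SimpleGraph V) (H : SimpleGraph W) :
    SimpleGraph (V ⊕ W) :=
  SimpleGraph.fromRel (fun x y =>
    match x, y with
    | Sum.inl a, Sum.inl b => G.Adj a b
    | Sum.inr a, Sum.inr b => H.Adj a b
    | Sum.inl _, Sum.inr _ => True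
    | Sum.inr _, Sum.inl _ => False)

/-- `H` is a minor of `G` (branch-set formulation, equivalent to being obtainable from `G`
by vertex deletions, edge deletions and edge contractions). -/
def IsMinorOf {W V : Type*} (H : SimpleGraph W) (G : SimpleGraph V) : Prop :=
  ∃ φ : W → Set V,
    (∀ w, (SimpleGraph.induce (φ w) G).Connected) ∧
    (Pairwise fun w w' => Disjoint (φ w) (φ w')) ∧
    (∀ ⦃w w'⦄, H.Adj w w' → ∃ x ∈ φ w, ∃ y ∈ φ w', G.Adj x y)

/-- `H` is a proper minor of `G`: a minor that is not isomorphic to `G`. -/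
def IsProperMinorOf {W V : Type*} (H : SimpleGraph W) (G : SimpleGraph V) : Prop :=
  IsMinorOf H G ∧ ¬ Nonempty (H ≃g G)

/-- `G` is minor minimal with respect to dimension `n`. -/
def MinorMinimalDim {V : Type*} (G : SimpleGraph V) (n : ℕ) : Prop :=
  graphDim G = n ∧
  ∀ (W : Type) [Fintype W] (H : SimpleGraph W), Nonempty W →
    IsProperMinorOf H G → graphDim H < n

/-- `G` is minor minimal with respect to spherical dimension `n`. -/
def MinorMinimalSDim {V : Type*} [Fintype V] (G : SimpleGraph V) (n : ℕ) : Prop :=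
  sphericalDim G = n ∧
  ∀ (W : Type) [Fintype W] (H : SimpleGraph W), Nonempty W →
    IsProperMinorOf H G → sphericalDim H < n

/-- The vertex type of the graph `Sₙ`. -/
def SType : ℕ → Type
  | 0 => Fin 0
  | 1 => Fin 1
  | 2 => Fin 2
  | 3 => Fin 3
  | (n + 4) => Fin (n + 1) ⊕ Fin 3

instance : (n : ℕ) → Fintype (SType n)
  | 0 => inferInstanceAs (Fintype (Fin 0))
  | 1 => inferInstanceAs (Fintype (Fin 1))
  | 2 => inferInstanceAs (Fintype (Fin 2))
  | 3 => inferInstanceAs (Fintype (Fin 3))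
  | (n + 4) => inferInstanceAs (Fintype (Fin (n + 1) ⊕ Fin 3))

/-- The graph `Sₙ`:  `S₁ = ε₁`, `S₂ = ε₂`, `S₃ = ε₃`, and `Sₙ = K_{n-3} + ε₃` for `n ≥ 4`. -/
def SGraph : (n : ℕ) → SimpleGraph (SType n)
  | 0 => ⊥
  | 1 => ⊥
  | 2 => ⊥
  | 3 => ⊥
  | (n + 4) => graphJoin (⊤ : SimpleGraph (Fin (n + 1))) (⊥ : SimpleGraph (Fin 3))


open Module RealInnerProductSpace

-- helpers
lemma aux_join_adj_inl {V : Type} {G : SimpleGraph V} {v w : V} (h : G.Adj v w) :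
    (graphJoin G (⊤ : SimpleGraph (Fin 1))).Adj (Sum.inl v) (Sum.inl w) := by
  rw [graphJoin, SimpleGraph.fromRel_adj]
  exact ⟨by simp [h.ne], Or.inl h⟩

lemma aux_join_adj_inr {V : Type} {G : SimpleGraph V} (v : V) (j : Fin 1) :
    (graphJoin G (⊤ : SimpleGraph (Fin 1))).Adj (Sum.inl v) (Sum.inr j) := by
  rw [graphJoin, SimpleGraph.fromRel_adj]
  exact ⟨by simp, Or.inl trivial⟩

lemma aux_not_mem_segment {n : ℕ} {u v w : EuclideanSpace ℝ (Fin n)}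
    (huv : dist u v = 1) (hwu : dist u w = 1) (hwv : dist w v = 1) :
    w ∉ segment ℝ u v := fun h => by
  have h2 := dist_add_dist_of_mem_segment h
  rw [huv, hwu, hwv] at h2
  norm_num at h2

lemma aux_simplex (T : Type) [Fintype T] (G : SimpleGraph T) :
    HasSphericalEmbedding G (Fintype.card T) := by
  classical
  set e := Fintype.equivFin T
  set f : T → EuclideanSpace ℝ (Fin (Fintype.card T)) :=
    fun i => (Real.sqrt 2)⁻¹ • EuclideanSpace.single (e i) (1 : ℝ) with hfdef
  have hs2 : (0:ℝ) < Real.sqrt 2 := by positivity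
  have hdist : ∀ i j, i ≠ j → dist (f i) (f j) = 1 := by
    intro i j hij
    have hnd : ‖(EuclideanSpace.single (e i) (1:ℝ)) - EuclideanSpace.single (e j) 1‖ ^ 2 = 2 := by
      rw [norm_sub_sq_real, EuclideanSpace.norm_single, EuclideanSpace.norm_single,
        EuclideanSpace.inner_single_left]
      rw [EuclideanSpace.single_apply]
      simp [hij]
      norm_num
    have hnd' : ‖(EuclideanSpace.single (e i) (1:ℝ)) - EuclideanSpace.single (e j) 1‖
        = Real.sqrt 2 := by
      rw [← Real.sqrt_sq (norm_nonneg _), hnd]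
    rw [hfdef]
    simp only [dist_eq_norm, ← smul_sub, norm_smul, hnd']
    rw [Real.norm_eq_abs, abs_of_pos (by positivity)]
    field_simp
  have hinj : Function.Injective f := by
    intro i j hij
    by_contra hne
    have := hdist i j hne
    rw [hij, dist_self] at this
    norm_num at this
  refine ⟨(Real.sqrt 2)⁻¹, by positivity, ?_, f, ⟨hinj, fun u v h => hdist u v h.ne, ?_⟩, 0, ?_⟩
  · rw [inv_lt_one_iff₀]
    right
    nlinarith [Real.sq_sqrt (by norm_num : (2:ℝ) ≥ 0), Real.sqrt_nonneg 2]
  · intro u v huv w hwu hwv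
    exact aux_not_mem_segment (hdist u v huv.ne) (hdist u w (Ne.symm hwu)) (hdist w v hwv)
  · intro v
    rw [dist_zero_right, hfdef]
    simp only [norm_smul, EuclideanSpace.norm_single, norm_one, mul_one, Real.norm_eq_abs]
    rw [abs_of_pos (by positivity)]

lemma aux_key {V : Type} [Fintype V] [Nonempty V] (G : SimpleGraph V) {n : ℕ}
    (h : HasSphericalEmbedding (graphJoin G (⊤ : SimpleGraph (Fin 1))) n) :
    1 ≤ n ∧ (2 ≤ Fintype.card V → HasSphericalEmbedding G (n - 1)) := by
  classical
  obtain ⟨r, hr0, hr1, f, ⟨finj, fdist, fseg⟩, c, hc⟩ := h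
  have v₀ : V := Classical.arbitrary V
  have hn : 1 ≤ n := by
    by_contra hn
    push_neg at hn
    interval_cases n
    have : f (Sum.inl v₀) = f (Sum.inr 0) := Subsingleton.elim _ _
    exact Sum.inl_ne_inr (finj this)
  refine ⟨hn, fun hcard => ?_⟩
  obtain ⟨m, rfl⟩ : ∃ m, n = m + 1 := ⟨n - 1, (Nat.succ_pred_eq_of_pos hn).symm⟩
  haveI : Fact (finrank ℝ (EuclideanSpace ℝ (Fin (m + 1))) = m + 1) :=
    ⟨finrank_euclideanSpace_fin⟩
  set p := f (Sum.inr 0) with hp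
  set d : EuclideanSpace ℝ (Fin (m+1)) := p - c with hd
  have hdn : ‖d‖ = r := by rw [hd, ← dist_eq_norm]; exact hc _
  have hd0 : d ≠ 0 := by
    intro h0; rw [h0, norm_zero] at hdn; exact hr0.ne hdn
  have hxc : ∀ v : V, ‖f (Sum.inl v) - c‖ = r := fun v => by
    rw [← dist_eq_norm]; exact hc _
  have hxp : ∀ v : V, ‖f (Sum.inl v) - p‖ = 1 := fun v => by
    rw [← dist_eq_norm]; exact fdist (aux_join_adj_inr v 0)
  have hinner : ∀ v : V, (inner ℝ (f (Sum.inl v) - c) d : ℝ) = r ^ 2 - 1 / 2 := by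
    intro v
    have h1 : ‖(f (Sum.inl v) - c) - d‖ ^ 2 = 1 := by
      rw [hd, sub_sub_sub_cancel_right, hxp v]; norm_num
    rw [norm_sub_sq_real, hxc v, hdn] at h1
    nlinarith
  set s : ℝ := (r ^ 2 - 1 / 2) / r ^ 2 with hs
  set c' : EuclideanSpace ℝ (Fin (m+1)) := c + s • d with hc'
  have hsub : ∀ v : V, f (Sum.inl v) - c' = (f (Sum.inl v) - c) - s • d := fun v => by
    rw [hc', sub_add_eq_sub_sub]
  have hsr : s * r ^ 2 = r ^ 2 - 1 / 2 := by
    rw [hs]; field_simp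
  have horth : ∀ v : V, f (Sum.inl v) - c' ∈ (ℝ ∙ d)ᗮ := by
    intro v
    rw [Submodule.mem_orthogonal_singleton_iff_inner_left, hsub v, inner_sub_left,
      real_inner_smul_left, hinner v, real_inner_self_eq_norm_sq, hdn]
    nlinarith
  have hnormsq : ∀ v : V, ‖f (Sum.inl v) - c'‖ ^ 2 = r ^ 2 - (r ^ 2 - 1 / 2) * s := by
    intro v
    rw [hsub v, norm_sub_sq_real, hxc v, real_inner_smul_right, hinner v, norm_smul,
      Real.norm_eq_abs, mul_pow, sq_abs, hdn]
    linear_combination s * hsr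
  obtain ⟨a, b, hab⟩ := Fintype.exists_pair_of_one_lt_card hcard
  set r' : ℝ := ‖f (Sum.inl a) - c'‖ with hr'
  have hr'v : ∀ v : V, ‖f (Sum.inl v) - c'‖ = r' := by
    intro v
    have h1 : ‖f (Sum.inl v) - c'‖ ^ 2 = r' ^ 2 := by rw [hnormsq v, hr', hnormsq a]
    rw [← Real.sqrt_sq (norm_nonneg (f (Sum.inl v) - c')), h1,
      Real.sqrt_sq (norm_nonneg _)]
  have hr'0 : 0 < r' := by
    rcases (norm_nonneg (f (Sum.inl a) - c')).lt_or_eq with h | h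
    · exact h
    · exfalso
      have hr'eq : r' = 0 := hr'.trans h.symm
      have ha0 : f (Sum.inl a) = c' := by
        rw [← sub_eq_zero]; exact norm_eq_zero.mp ((hr'v a).trans hr'eq)
      have hb0 : f (Sum.inl b) = c' := by
        rw [← sub_eq_zero]; exact norm_eq_zero.mp ((hr'v b).trans hr'eq)
      exact hab (Sum.inl_injective (finj (ha0.trans hb0.symm)))
  have hr'1 : r' < 1 := by
    have h2 := hnormsq a
    have h3 : (r ^ 2 - 1 / 2) * s = (r ^ 2 - 1 / 2) ^ 2 / r ^ 2 := by
      rw [hs]; ring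
    have h4 : 0 ≤ (r ^ 2 - 1 / 2) * s := by rw [h3]; positivity
    nlinarith [norm_nonneg (f (Sum.inl a) - c')]
  set B := OrthonormalBasis.fromOrthogonalSpanSingleton (𝕜 := ℝ) m hd0 with hB
  set g : V → EuclideanSpace ℝ (Fin m) :=
    fun v => B.repr ⟨f (Sum.inl v) - c', horth v⟩ with hg
  have hgd : ∀ v w : V, dist (g v) (g w) = dist (f (Sum.inl v)) (f (Sum.inl w)) := by
    intro v w
    rw [hg]
    rw [B.repr.dist_map]
    rw [Subtype.dist_eq]
    simp only [dist_eq_norm, sub_sub_sub_cancel_right]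
  have key : HasSphericalEmbedding G m := by
    refine ⟨r', hr'0, hr'1, g, ⟨?_, ?_, ?_⟩, 0, ?_⟩
    · intro v w hvw
      have h1 := hgd v w
      rw [hvw, dist_self] at h1
      exact Sum.inl_injective (finj (dist_eq_zero.mp h1.symm))
    · intro v w hvw
      rw [hgd]
      exact fdist (aux_join_adj_inl hvw)
    · intro v w hvw x hxv hxw hmem
      obtain ⟨a', b', ha', hb', hab', heq⟩ := hmem
      apply fseg (aux_join_adj_inl hvw) (Sum.inl x) (by simpa using hxv) (by simpa using hxw)
      refine ⟨a', b', ha', hb', hab', ?_⟩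
      have h1 : a' • (⟨f (Sum.inl v) - c', horth v⟩ : (ℝ ∙ d)ᗮ)
          + b' • ⟨f (Sum.inl w) - c', horth w⟩ = ⟨f (Sum.inl x) - c', horth x⟩ := by
        apply B.repr.injective
        rw [map_add, map_smul, map_smul]
        exact heq
      have h2 : a' • (f (Sum.inl v) - c') + b' • (f (Sum.inl w) - c')
          = f (Sum.inl x) - c' := congrArg Subtype.val h1
      have h3 : a' • f (Sum.inl v) + b' • f (Sum.inl w)
          = (a' • (f (Sum.inl v) - c') + b' • (f (Sum.inl w) - c')) + (a' + b') • c' := by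
        rw [add_smul]
        simp only [smul_sub]
        abel
      rw [h3, h2, hab', one_smul, sub_add_cancel]
    · intro v
      rw [dist_zero_right, hg]
      rw [B.repr.norm_map]
      exact hr'v v
  simpa using key


/-- For every finite simple graph `G` with at least one vertex,
`sdim (G + K₁) > sdim G`. -/
theorem stmt16 (V : Type) [Fintype V] [Nonempty V] (G : SimpleGraph V) :
    sphericalDim G < sphericalDim (graphJoin G (⊤ : SimpleGraph (Fin 1))) := by
  classical
  have hJ : HasSphericalEmbedding (graphJoin G (⊤ : SimpleGraph (Fin 1)))
      (Fintype.card (V ⊕ Fin 1)) := aux_simplex _ _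
  set S := {n | HasSphericalEmbedding (graphJoin G (⊤ : SimpleGraph (Fin 1))) n} with hS
  have hN : sInf S ∈ S := Nat.sInf_mem ⟨_, hJ⟩
  obtain ⟨h1, h2⟩ := aux_key G hN
  have hcardJ : ¬ Fintype.card (V ⊕ Fin 1) ≤ 1 := by
    rw [Fintype.card_sum, Fintype.card_fin]
    have := Fintype.card_pos (α := V)
    omega
  have hdimJ : sphericalDim (graphJoin G (⊤ : SimpleGraph (Fin 1))) = sInf S := by
    rw [sphericalDim, if_neg hcardJ]
  by_cases hc1 : Fintype.card V ≤ 1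
  · have h0 : sphericalDim G = 0 := by rw [sphericalDim, if_pos hc1]
    omega
  · push_neg at hc1
    have hG := h2 hc1
    have hle : sphericalDim G ≤ sInf S - 1 := by
      rw [sphericalDim, if_neg (by omega)]
      exact Nat.sInf_le hG
    omega
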